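/- Let g_r, g_b be nonzero vectors in ℝ^d and g = g_r + g_b. Define p_r = g - (⟨g, g_r⟩/‖g_r‖²) g_r (the projection of g onto the orthogonal complement of g_r) and p_b = g - (⟨g, g_b⟩/‖g_b‖²) g_b. Then for all c₁, c₂ ≥ 0, the vector v = c₁ p_r + c₂ p_b satisfies ⟨v, g_r⟩ ≥ 0 and ⟨v, g_b⟩ ≥ 0. -/

import Mathlib

open RealInnerProductSpace

theorem stmt2 {d : ℕ} (g_r g_b : EuclideanSpace ℝ (Fin d))
    (hr : g_r ≠ 0) (hb : g_b ≠ 0)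
    (g p_r p_b : EuclideanSpace ℝ (Fin d))
    (hg : g = g_r + g_b)
    (hpr : p_r = g - (⟪g, g_r⟫ / ‖g_r‖ ^ 2) • g_r)
    (hpb : p_b = g - (⟪g, g_b⟫ / ‖g_b‖ ^ 2) • g_b)
    (c₁ c₂ : ℝ) (hc₁ : 0 ≤ c₁) (hc₂ : 0 ≤ c₂) :
    ⟪c₁ • p_r + c₂ • p_b, g_r⟫ ≥ 0 ∧ ⟪c₁ • p_r + c₂ • p_b, g_b⟫ ≥ 0 := by
  have har : (0:ℝ) < ‖g_r‖ ^ 2 := by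
    have := norm_pos_iff.2 hr; positivity
  have hab : (0:ℝ) < ‖g_b‖ ^ 2 := by
    have := norm_pos_iff.2 hb; positivity
  have hcs : ⟪g_r, g_b⟫ * ⟪g_r, g_b⟫ ≤ ⟪g_r, g_r⟫ * ⟪g_b, g_b⟫ :=
    real_inner_mul_inner_self_le g_r g_b
  have hrr : ⟪g_r, g_r⟫ = ‖g_r‖ ^ 2 := real_inner_self_eq_norm_sq g_r
  have hbb : ⟪g_b, g_b⟫ = ‖g_b‖ ^ 2 := real_inner_self_eq_norm_sq g_b
  have hsym : ⟪g_b, g_r⟫ = ⟪g_r, g_b⟫ := (real_inner_comm g_b g_r).symm ▸ rfl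
  rw [hrr, hbb] at hcs
  subst hg hpr hpb
  simp only [inner_add_left, inner_smul_left, inner_sub_left, RCLike.ofReal_real_eq_id, id,
    inner_add_right, starRingEnd_apply, star_trivial]
  rw [hrr, hbb, hsym]
  set t := ⟪g_r, g_b⟫ with ht
  set ar := ‖g_r‖ ^ 2
  set ab := ‖g_b‖ ^ 2
  have e1 : ar + t - (ar + t) / ar * ar = 0 := by field_simp; ring
  have e2 : ar + t - (t + ab) / ab * t = (ar * ab - t * t) / ab := by
    field_simp; ring
  have e3 : t + ab - (t + ab) / ab * ab = 0 := by field_simp; ring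
  have e4 : t + ab - (ar + t) / ar * t = (ar * ab - t * t) / ar := by
    field_simp; ring
  have hnn : 0 ≤ ar * ab - t * t := by linarith
  constructor
  · rw [e1, e2]
    have := div_nonneg hnn hab.le
    nlinarith
  · rw [e3, e4]
    have := div_nonneg hnn har.le
    nlinarith
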